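/- arXiv:1709.02952 — 2 statements merged into one kernel-verified Lean document; each statement's English description precedes it below -/
import Mathlib

section
/- Let $v\equiv 3\pmod 4$ be a prime power, $\mathbb{F}_v$ the finite field of order $v$ with primitive element $g$. Set $D_1=\{0\}$, $D_2$ the set of nonzero squares, $D_3$ the set of nonsquares. Then $\{D_1,D_2,D_3\}$ is a $(v,3;1,\frac{v-1}{2},\frac{v-1}{2};1,\frac{v+1}{4},\frac{v+1}{4})$-GSEDF in the additive group of $\mathbb{F}_v$. -/
/-- The number of times `g` occurs in the multiset `Δ(A,B) = {x - y : x ∈ A, y ∈ B}`. -/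
noncomputable def extDiffCount {G : Type*} [AddCommGroup G] (A B : Finset G) (g : G) : ℕ :=
  letI := Classical.decEq G
  ((A ×ˢ B).filter (fun p => p.1 - p.2 = g)).card

/-- `{D i}` is a `(v, m; k₁,…,k_m; λ₁,…,λ_m)`-GSEDF in the finite abelian group `G`. -/
def IsGSEDF {G : Type*} [AddCommGroup G] [Fintype G] (v m : ℕ)
    (D : Fin m → Finset G) (k lam : Fin m → ℕ) : Prop :=
  Fintype.card G = v ∧
  (∀ i, (D i).card = k i) ∧
  (∀ i, 0 < k i) ∧ (∀ i, 0 < lam i) ∧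
  (∀ i j, i ≠ j → Disjoint (D i) (D j)) ∧
  ∀ i, ∀ g : G, g ≠ 0 →
    (∑ j ∈ Finset.univ.filter (· ≠ i), extDiffCount (D i) (D j) g) = lam i


open Finset

lemma extDiffCount_eq {G : Type*} [AddCommGroup G] [DecidableEq G] (A B : Finset G) (g : G) :
    extDiffCount A B g = (B.filter (fun y => y + g ∈ A)).card := by
  rw [extDiffCount]
  apply Finset.card_nbij' (fun p => p.2) (fun y => (y + g, y))
  · intro p hp
    simp only [mem_coe, mem_filter, mem_product] at hp ⊢
    obtain ⟨⟨h1, h2⟩, h3⟩ := hp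
    refine ⟨h2, ?_⟩
    have : p.2 + g = p.1 := by rw [← h3]; abel
    rwa [this]
  · intro y hy
    simp only [mem_coe, mem_filter, mem_product] at hy ⊢
    exact ⟨⟨hy.2, hy.1⟩, by abel⟩
  · intro p hp
    simp only [mem_coe, mem_filter, mem_product] at hp
    have : p.2 + g = p.1 := by rw [← hp.2]; abel
    simp [this]
  · intro y hy; rfl

lemma extDiffCount_sum_univ {G : Type*} [AddCommGroup G] [Fintype G] [DecidableEq G]
    (A B : Finset G) : (∑ g : G, extDiffCount A B g) = A.card * B.card := by
  classical
  have : ∀ g, extDiffCount A B g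
      = ((A ×ˢ B).filter (fun p => p.1 - p.2 = g)).card := by
    intro g; rw [extDiffCount]; congr 1; exact Finset.filter_congr_decidable _ _ _
  simp_rw [this]
  rw [← Finset.card_product A B,
    Finset.card_eq_sum_card_fiberwise (f := fun p : G × G => p.1 - p.2) (t := univ)
      (fun p _ => Finset.mem_univ _)]

section Paley

set_option linter.unusedSectionVars false

variable {F : Type*} [Field F] [Fintype F] [DecidableEq F]

/-- negation flips squareness when card ≡ 3 mod 4 -/
lemma paley_neg_iff (hv : Fintype.card F % 4 = 3) {x : F} (hx : x ≠ 0) :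
    IsSquare (-x) ↔ ¬ IsSquare x := by
  have hm1 : ¬ IsSquare (-1 : F) := by
    rw [FiniteField.isSquare_neg_one_iff]; simp [hv]
  have h1 : quadraticChar F (-1) = -1 := quadraticChar_neg_one_iff_not_isSquare.mpr hm1
  have hchi : quadraticChar F (-x) = - quadraticChar F x := by
    rw [show (-x : F) = (-1) * x by ring, map_mul, h1]; ring
  constructor
  · intro h
    have := (quadraticChar_one_iff_isSquare (neg_ne_zero.mpr hx)).mpr h
    rw [hchi] at this
    exact quadraticChar_neg_one_iff_not_isSquare.mp (by omega)
  · intro h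
    have := quadraticChar_neg_one_iff_not_isSquare.mpr h
    refine (quadraticChar_one_iff_isSquare (neg_ne_zero.mpr hx)).mp ?_
    rw [hchi, this]; ring

section QN

variable (Q N : Finset F)
variable (hQ : ∀ x : F, x ∈ Q ↔ x ≠ 0 ∧ IsSquare x)
variable (hN : ∀ x : F, x ∈ N ↔ ¬ IsSquare x)

include hQ in
lemma paley_mulQ {c : F} (hc0 : c ≠ 0) (hc : IsSquare c) {x : F} (hx : x ∈ Q) : c * x ∈ Q := by
  rw [hQ] at hx ⊢
  exact ⟨mul_ne_zero hc0 hx.1, hc.mul hx.2⟩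

include hQ in
lemma paley_QQ_mul {c : F} (hc0 : c ≠ 0) (hc : IsSquare c) (g : F) :
    extDiffCount Q Q (c * g) = extDiffCount Q Q g := by
  rw [extDiffCount_eq, extDiffCount_eq]
  apply Finset.card_nbij' (fun y => c⁻¹ * y) (fun y => c * y)
  · intro y hy
    simp only [mem_coe, mem_filter] at hy ⊢
    refine ⟨paley_mulQ Q hQ (inv_ne_zero hc0) hc.inv hy.1, ?_⟩
    have : c⁻¹ * y + g = c⁻¹ * (y + c * g) := by field_simp
    rw [this]
    exact paley_mulQ Q hQ (inv_ne_zero hc0) hc.inv hy.2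
  · intro y hy
    simp only [mem_coe, mem_filter] at hy ⊢
    refine ⟨paley_mulQ Q hQ hc0 hc hy.1, ?_⟩
    have : c * y + c * g = c * (y + g) := by ring
    rw [this]
    exact paley_mulQ Q hQ hc0 hc hy.2
  · intro y _; field_simp
  · intro y _; field_simp

lemma paley_QQ_neg (g : F) : extDiffCount Q Q (-g) = extDiffCount Q Q g := by
  rw [extDiffCount_eq, extDiffCount_eq]
  apply Finset.card_nbij' (fun y => y + -g) (fun y => y + g)
  · intro y hy
    simp only [mem_coe, mem_filter] at hy ⊢
    refine ⟨hy.2, ?_⟩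
    have h : y + -g + g = y := by ring
    rw [h]; exact hy.1
  · intro y hy
    simp only [mem_coe, mem_filter] at hy ⊢
    refine ⟨hy.2, ?_⟩
    have h : y + g + -g = y := by ring
    rw [h]; exact hy.1
  · intro y _; ring
  · intro y _; ring

include hQ in
lemma paley_QQ_const (hv : Fintype.card F % 4 = 3) {g h : F} (hg : g ≠ 0) (hh : h ≠ 0) :
    extDiffCount Q Q h = extDiffCount Q Q g := by
  set c := h * g⁻¹ with hc
  have hc0 : c ≠ 0 := mul_ne_zero hh (inv_ne_zero hg)
  have hcg : c * g = h := by rw [hc, inv_mul_cancel_right₀ hg]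
  by_cases hsq : IsSquare c
  · rw [← hcg]; exact paley_QQ_mul Q hQ hc0 hsq g
  · have hsq' : IsSquare (-c) := (paley_neg_iff hv hc0).mpr hsq
    have h' : h = -(-c * g) := by rw [← hcg]; ring
    rw [h', paley_QQ_neg, paley_QQ_mul Q hQ (neg_ne_zero.mpr hc0) hsq' g]

include hQ in
lemma paley_QQ_zero : extDiffCount Q Q 0 = Q.card := by
  rw [extDiffCount_eq]
  simp [Finset.filter_mem_eq_inter]

include hQ hN in
lemma paley_negQN (hv : Fintype.card F % 4 = 3) {x : F} (hx : x ∈ Q) : -x ∈ N := by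
  rw [hQ] at hx
  rw [hN]
  intro hcon
  exact ((paley_neg_iff hv hx.1).mp hcon) hx.2

include hQ hN in
lemma paley_negNQ (hv : Fintype.card F % 4 = 3) {x : F} (hx : x ∈ N) : -x ∈ Q := by
  rw [hN] at hx
  have hx0 : x ≠ 0 := fun h => hx (h ▸ (IsSquare.zero : IsSquare (0:F)))
  rw [hQ]
  exact ⟨neg_ne_zero.mpr hx0, (paley_neg_iff hv hx0).mpr hx⟩

include hQ hN in
lemma paley_cardN (hv : Fintype.card F % 4 = 3) : N.card = Q.card := by
  apply Finset.card_nbij' (fun x => -x) (fun x => -x)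
  · intro x hx; exact paley_negNQ Q N hQ hN hv hx
  · intro x hx; exact paley_negQN Q N hQ hN hv hx
  · intro x _; simp
  · intro x _; simp

include hQ hN in
lemma paley_union : Q ∪ N = Finset.univ.erase 0 := by
  ext x
  simp only [Finset.mem_union, Finset.mem_erase, Finset.mem_univ, and_true, hQ, hN]
  constructor
  · rintro (⟨h, _⟩ | h)
    · exact h
    · exact fun h0 => h (h0 ▸ (IsSquare.zero : IsSquare (0:F)))
  · intro h
    by_cases hs : IsSquare x
    · exact Or.inl ⟨h, hs⟩
    · exact Or.inr hs

include hQ hN in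
lemma paley_card_sum : Q.card + N.card = Fintype.card F - 1 := by
  have hd : Disjoint Q N := by
    rw [Finset.disjoint_left]
    intro a ha hb
    rw [hQ] at ha; rw [hN] at hb
    exact hb ha.2
  rw [← Finset.card_union_of_disjoint hd, paley_union Q N hQ hN,
    Finset.card_erase_of_mem (Finset.mem_univ 0), Finset.card_univ]

include hQ hN in
lemma paley_NN (hv : Fintype.card F % 4 = 3) (g : F) :
    extDiffCount N N g = extDiffCount Q Q g := by
  classical
  rw [extDiffCount, extDiffCount]
  apply Finset.card_nbij' (fun p => (-p.2, -p.1)) (fun p => (-p.2, -p.1))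
  · intro p hp
    simp only [mem_coe, mem_filter, mem_product] at hp ⊢
    refine ⟨⟨paley_negNQ Q N hQ hN hv hp.1.2, paley_negNQ Q N hQ hN hv hp.1.1⟩, ?_⟩
    rw [← hp.2]; ring
  · intro p hp
    simp only [mem_coe, mem_filter, mem_product] at hp ⊢
    refine ⟨⟨paley_negQN Q N hQ hN hv hp.1.2, paley_negQN Q N hQ hN hv hp.1.1⟩, ?_⟩
    rw [← hp.2]; ring
  · intro p _; simp
  · intro p _; simp

include hQ hN in
lemma paley_sum_three (A : Finset F) (g : F) :
    extDiffCount A {0} g + extDiffCount A Q g + extDiffCount A N g = A.card := by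
  have hd : Disjoint Q N := by
    rw [Finset.disjoint_left]
    intro a ha hb
    rw [hQ] at ha; rw [hN] at hb
    exact hb ha.2
  have h0Q : Disjoint ({0} : Finset F) Q := by
    rw [Finset.disjoint_left]
    intro a ha hb
    rw [Finset.mem_singleton] at ha
    rw [hQ] at hb
    exact hb.1 ha
  have h0N : Disjoint ({0} : Finset F) N := by
    rw [Finset.disjoint_left]
    intro a ha hb
    rw [Finset.mem_singleton] at ha
    rw [hN] at hb
    exact hb (ha ▸ (IsSquare.zero : IsSquare (0:F)))
  have hU : ({0} : Finset F) ∪ Q ∪ N = Finset.univ := by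
    rw [Finset.union_assoc]
    ext x
    simp only [Finset.mem_union, Finset.mem_univ, iff_true, Finset.mem_singleton]
    by_cases h0 : x = 0
    · exact Or.inl h0
    · right
      have := paley_union Q N hQ hN
      have : x ∈ Q ∪ N := by rw [this]; simp [h0]
      simpa using this
  rw [extDiffCount_eq, extDiffCount_eq, extDiffCount_eq]
  have hcard : A.card = (Finset.univ.filter (fun y => y + g ∈ A)).card := by
    apply Finset.card_nbij' (fun a => a - g) (fun y => y + g)
    · intro a ha; simp only [mem_coe, mem_filter, mem_univ, true_and]
      have : a - g + g = a := by ring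
      rw [this]; exact ha
    · intro y hy; simp only [mem_coe, mem_filter] at hy; exact hy.2
    · intro a _; ring
    · intro y _; ring
  rw [hcard, ← hU, Finset.filter_union, Finset.filter_union,
    Finset.card_union_of_disjoint, Finset.card_union_of_disjoint]
  · exact Finset.disjoint_filter_filter h0Q
  · rw [← Finset.filter_union]
    exact Finset.disjoint_filter_filter (Finset.disjoint_union_left.mpr ⟨h0N, hd⟩)

include hQ hN in
lemma paley_QQ_val (hv : Fintype.card F % 4 = 3) {k : ℕ} (hk : Fintype.card F = 4 * k + 3)
    {g : F} (hg : g ≠ 0) : extDiffCount Q Q g = k := by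
  have hcardN := paley_cardN Q N hQ hN hv
  have hcs := paley_card_sum Q N hQ hN
  have hQc : Q.card = 2 * k + 1 := by omega
  have htot : (∑ h : F, extDiffCount Q Q h) = Q.card * Q.card := extDiffCount_sum_univ Q Q
  rw [← Finset.add_sum_erase _ _ (Finset.mem_univ (0 : F))] at htot
  have hconst : ∀ h ∈ Finset.univ.erase (0 : F), extDiffCount Q Q h = extDiffCount Q Q g := by
    intro h hh
    exact paley_QQ_const Q hQ hv hg (Finset.mem_erase.mp hh).1
  rw [Finset.sum_congr rfl hconst, Finset.sum_const,
    Finset.card_erase_of_mem (Finset.mem_univ 0), Finset.card_univ, paley_QQ_zero Q hQ,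
    smul_eq_mul, hQc, hk] at htot
  have h2 : (2 * k + 1) * (2 * k + 1) = 2 * k + 1 + (4 * k + 3 - 1) * k := by
    have : 4 * k + 3 - 1 = 4 * k + 2 := by omega
    rw [this]; ring
  rw [h2] at htot
  have h3 := Nat.add_left_cancel htot
  exact Nat.eq_of_mul_eq_mul_left (by omega) h3

end QN

end Paley


/-- Paley-type GSEDF. For a finite field of order `v ≡ 3 (mod 4)`,
`{0}`, the nonzero squares, and the nonsquares form a
`(v, 3; 1, (v-1)/2, (v-1)/2; 1, (v+1)/4, (v+1)/4)`-GSEDF. -/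
theorem gsedf_paley (F : Type*) [Field F] [Fintype F] [DecidableEq F]
    [DecidablePred (IsSquare : F → Prop)]
    (hv : Fintype.card F % 4 = 3) :
    IsGSEDF (Fintype.card F) 3
      ![({0} : Finset F),
        Finset.univ.filter (fun x : F => x ≠ 0 ∧ IsSquare x),
        Finset.univ.filter (fun x : F => ¬ IsSquare x)]
      ![1, (Fintype.card F - 1) / 2, (Fintype.card F - 1) / 2]
      ![1, (Fintype.card F + 1) / 4, (Fintype.card F + 1) / 4] := by
  set Q := Finset.univ.filter (fun x : F => x ≠ 0 ∧ IsSquare x) with hQdef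
  set N := Finset.univ.filter (fun x : F => ¬ IsSquare x) with hNdef
  have hQ : ∀ x : F, x ∈ Q ↔ x ≠ 0 ∧ IsSquare x := by intro x; simp [hQdef]
  have hN : ∀ x : F, x ∈ N ↔ ¬ IsSquare x := by intro x; simp [hNdef]
  obtain ⟨k, hk⟩ : ∃ k, Fintype.card F = 4 * k + 3 := ⟨Fintype.card F / 4, by omega⟩
  have hcardN : N.card = Q.card := paley_cardN Q N hQ hN hv
  have hcs : Q.card + N.card = Fintype.card F - 1 := paley_card_sum Q N hQ hN
  have hQc : Q.card = 2 * k + 1 := by omega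
  have hNc : N.card = 2 * k + 1 := by omega
  have d01 : Disjoint ({0} : Finset F) Q := by
    rw [Finset.disjoint_left]
    intro a ha hb
    rw [Finset.mem_singleton] at ha
    exact ((hQ a).mp hb).1 ha
  have d02 : Disjoint ({0} : Finset F) N := by
    rw [Finset.disjoint_left]
    intro a ha hb
    rw [Finset.mem_singleton] at ha
    exact ((hN a).mp hb) (ha ▸ (IsSquare.zero : IsSquare (0 : F)))
  have d12 : Disjoint Q N := by
    rw [Finset.disjoint_left]
    intro a ha hb
    exact ((hN a).mp hb) ((hQ a).mp ha).2
  refine ⟨rfl, ?_, ?_, ?_, ?_, ?_⟩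
  · intro i; fin_cases i
    · simp
    · show Q.card = (Fintype.card F - 1) / 2
      omega
    · show N.card = (Fintype.card F - 1) / 2
      omega
  · intro i; fin_cases i
    · simp
    · show 0 < (Fintype.card F - 1) / 2
      omega
    · show 0 < (Fintype.card F - 1) / 2
      omega
  · intro i; fin_cases i
    · simp
    · show 0 < (Fintype.card F + 1) / 4
      omega
    · show 0 < (Fintype.card F + 1) / 4
      omega
  · intro i j hij
    fin_cases i <;> fin_cases j <;>
      first
        | exact absurd rfl hij
        | exact d01 | exact d02 | exact d12
        | exact d01.symm | exact d02.symm | exact d12.symm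
  · intro i g hg
    fin_cases i
    · have hfilter : (Finset.univ.filter (· ≠ (0 : Fin 3))) = {1, 2} := by decide
      show (∑ j ∈ Finset.univ.filter (· ≠ (0 : Fin 3)),
        extDiffCount ({0} : Finset F) (![({0} : Finset F), Q, N] j) g) = 1
      rw [hfilter, Finset.sum_insert (by decide), Finset.sum_singleton]
      show extDiffCount ({0} : Finset F) Q g + extDiffCount ({0} : Finset F) N g = 1
      rw [extDiffCount_eq, extDiffCount_eq]
      have hgen : ∀ S : Finset F,
          S.filter (fun y => y + g ∈ ({0} : Finset F)) = S.filter (fun y => y = -g) := by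
        intro S
        apply Finset.filter_congr
        intro y _
        simp [add_eq_zero_iff_eq_neg]
      rw [hgen, hgen, Finset.filter_eq', Finset.filter_eq']
      have hng : -g ≠ 0 := neg_ne_zero.mpr hg
      by_cases hs : IsSquare (-g)
      · have h1 : -g ∈ Q := (hQ _).mpr ⟨hng, hs⟩
        have h2 : -g ∉ N := fun h => ((hN _).mp h) hs
        simp [h1, h2]
      · have h1 : -g ∉ Q := fun h => hs ((hQ _).mp h).2
        have h2 : -g ∈ N := (hN _).mpr hs
        simp [h1, h2]
    · have hfilter : (Finset.univ.filter (· ≠ (1 : Fin 3))) = {0, 2} := by decide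
      show (∑ j ∈ Finset.univ.filter (· ≠ (1 : Fin 3)),
        extDiffCount Q (![({0} : Finset F), Q, N] j) g) = (Fintype.card F + 1) / 4
      rw [hfilter, Finset.sum_insert (by decide), Finset.sum_singleton]
      show extDiffCount Q ({0} : Finset F) g + extDiffCount Q N g = (Fintype.card F + 1) / 4
      have h3 := paley_sum_three Q N hQ hN Q g
      have hQQ : extDiffCount Q Q g = k := paley_QQ_val Q N hQ hN hv hk hg
      omega
    · have hfilter : (Finset.univ.filter (· ≠ (2 : Fin 3))) = {0, 1} := by decide
      show (∑ j ∈ Finset.univ.filter (· ≠ (2 : Fin 3)),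
        extDiffCount N (![({0} : Finset F), Q, N] j) g) = (Fintype.card F + 1) / 4
      rw [hfilter, Finset.sum_insert (by decide), Finset.sum_singleton]
      show extDiffCount N ({0} : Finset F) g + extDiffCount N Q g = (Fintype.card F + 1) / 4
      have h3 := paley_sum_three Q N hQ hN N g
      have hNN : extDiffCount N N g = extDiffCount Q Q g := paley_NN Q N hQ hN hv g
      have hQQ : extDiffCount Q Q g = k := paley_QQ_val Q N hQ hN hv hk hg
      omega
end

section
/- Let $v>1$ and $t>1$ be odd. If there exists a $(v,2;2\lambda,\frac{v-1}{2};\lambda,\lambda)$-GSEDF in an abelian group $G$ of order $v$, then there exists a $(vt,2;4\lambda,\frac{vt-1}{2};2\lambda,2\lambda)$-GSEDF in $G\times\mathbb{Z}_t$. -/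
open Finset

section Aux
variable {H : Type*} [AddCommGroup H] [DecidableEq H]

lemma extDiffCount_def (A B : Finset H) (g : H) :
    extDiffCount A B g = ((A ×ˢ B).filter (fun p => p.1 - p.2 = g)).card := by
  unfold extDiffCount
  congr

lemma extDiffCount_eq_filter (A B : Finset H) (g : H) :
    extDiffCount A B g = (A.filter (fun a => a - g ∈ B)).card := by
  rw [extDiffCount_def]
  apply card_nbij' (fun p => p.1) (fun a => (a, a - g))
  · rintro ⟨a, b⟩ hp
    simp only [Finset.mem_coe, mem_filter, mem_product] at hp ⊢
    refine ⟨hp.1.1, ?_⟩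
    have : a - g = b := by rw [← hp.2]; exact sub_sub_cancel a b
    rw [this]; exact hp.1.2
  · intro a ha
    simp only [Finset.mem_coe, mem_filter, mem_product] at ha ⊢
    exact ⟨⟨ha.1, ha.2⟩, sub_sub_cancel a g⟩
  · rintro ⟨a, b⟩ hp
    simp only [Finset.mem_coe, mem_filter, mem_product] at hp
    have : a - g = b := by rw [← hp.2]; exact sub_sub_cancel a b
    simp [this]
  · intro a _; rfl

lemma extDiffCount_swap (A B : Finset H) (g : H) :
    extDiffCount A B g = extDiffCount B A (-g) := by
  rw [extDiffCount_def, extDiffCount_def]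
  apply card_nbij' Prod.swap Prod.swap
  · rintro ⟨a, b⟩ hp
    simp only [Finset.mem_coe, mem_filter, mem_product, Prod.swap] at hp ⊢
    exact ⟨⟨hp.1.2, hp.1.1⟩, by rw [← hp.2, neg_sub]⟩
  · rintro ⟨a, b⟩ hp
    simp only [Finset.mem_coe, mem_filter, mem_product, Prod.swap] at hp ⊢
    refine ⟨⟨hp.1.2, hp.1.1⟩, ?_⟩
    rw [← neg_neg (b - a), neg_sub, hp.2, neg_neg]
  · rintro ⟨a, b⟩ _; rfl
  · rintro ⟨a, b⟩ _; rfl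

lemma extDiffCount_univ [Fintype H] (A : Finset H) (g : H) :
    extDiffCount A univ g = A.card := by
  rw [extDiffCount_eq_filter]
  simp

lemma extDiffCount_univ_left [Fintype H] (A : Finset H) (g : H) :
    extDiffCount univ A g = A.card := by
  rw [extDiffCount_swap, extDiffCount_univ]

lemma extDiffCount_union_right (A B C : Finset H) (g : H) (hBC : Disjoint B C) :
    extDiffCount A (B ∪ C) g = extDiffCount A B g + extDiffCount A C g := by
  rw [extDiffCount_eq_filter, extDiffCount_eq_filter, extDiffCount_eq_filter]
  have hdis : Disjoint (A.filter (fun a => a - g ∈ B)) (A.filter (fun a => a - g ∈ C)) := by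
    refine disjoint_left.mpr ?_
    intro a ha hb
    simp only [mem_filter] at ha hb
    exact disjoint_left.mp hBC ha.2 hb.2
  rw [← card_union_of_disjoint hdis, ← filter_or]
  congr 1
  apply filter_congr
  intro a _
  simp [mem_union]

lemma extDiffCount_union_left (A B C : Finset H) (g : H) (hAB : Disjoint A B) :
    extDiffCount (A ∪ B) C g = extDiffCount A C g + extDiffCount B C g := by
  rw [extDiffCount_swap, extDiffCount_union_right _ _ _ _ hAB,
    ← extDiffCount_swap, ← extDiffCount_swap]

lemma extDiffCount_prod {H K : Type*} [AddCommGroup H] [AddCommGroup K]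
    [DecidableEq H] [DecidableEq K]
    (A₁ B₁ : Finset H) (A₂ B₂ : Finset K) (g : H) (c : K) :
    extDiffCount (A₁ ×ˢ A₂) (B₁ ×ˢ B₂) (g, c)
      = extDiffCount A₁ B₁ g * extDiffCount A₂ B₂ c := by
  classical
  rw [extDiffCount_def, extDiffCount_def, extDiffCount_def, ← card_product]
  apply card_nbij' (fun p => ((p.1.1, p.2.1), (p.1.2, p.2.2)))
    (fun q => ((q.1.1, q.2.1), (q.1.2, q.2.2)))
  · rintro ⟨⟨a1, a2⟩, ⟨b1, b2⟩⟩ hp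
    simp only [Finset.mem_coe, mem_filter, mem_product, Prod.ext_iff, Prod.fst_sub, Prod.snd_sub] at hp ⊢
    tauto
  · rintro ⟨⟨a1, b1⟩, ⟨a2, b2⟩⟩ hq
    simp only [Finset.mem_coe, mem_filter, mem_product, Prod.ext_iff, Prod.fst_sub, Prod.snd_sub] at hq ⊢
    tauto
  · rintro ⟨⟨a1, a2⟩, ⟨b1, b2⟩⟩ _; rfl
  · rintro ⟨⟨a1, b1⟩, ⟨a2, b2⟩⟩ _; rfl

end Aux

section ZModAux
variable (t : ℕ) [NeZero t]

def gsedfOSet : Finset (ZMod t) := Finset.univ.filter (fun x => x.val = 0 ∨ Odd x.val)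
def gsedfESet : Finset (ZMod t) := Finset.univ.filter (fun x => ¬(x.val = 0 ∨ Odd x.val))

lemma mem_gsedfOSet (x : ZMod t) : x ∈ gsedfOSet t ↔ (x.val = 0 ∨ Odd x.val) := by
  simp [gsedfOSet]

lemma gsedfOSet_union : gsedfOSet t ∪ gsedfESet t = univ :=
  filter_union_filter_not_eq _ _

lemma gsedfOSet_disjoint : Disjoint (gsedfOSet t) (gsedfESet t) :=
  disjoint_filter_filter_not _ _ _

lemma gsedf_key (htodd : Odd t) (ht : 1 < t) (z : ZMod t) (hz : z ≠ 0) :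
    z ∈ gsedfOSet t ↔ z + 1 ∉ gsedfOSet t := by
  have hval1 : (1 : ZMod t).val = 1 := by
    rw [ZMod.val_one_eq_one_mod]; exact Nat.mod_eq_of_lt ht
  have hlt : z.val < t := ZMod.val_lt z
  have hzv : z.val ≠ 0 := fun hh => hz ((ZMod.val_eq_zero z).mp hh)
  have hadd : (z + 1).val = (z.val + 1) % t := by rw [ZMod.val_add, hval1]
  obtain ⟨m, hm⟩ := htodd
  by_cases hc : z.val = t - 1
  · have h1 : (z + 1).val = 0 := by
      rw [hadd, hc, Nat.sub_add_cancel (by omega), Nat.mod_self]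
    simp only [mem_gsedfOSet, h1, Nat.odd_iff]
    simp only [true_or, not_true_eq_false, iff_false]
    omega
  · have h1 : (z + 1).val = z.val + 1 := by
      rw [hadd]; exact Nat.mod_eq_of_lt (by omega)
    simp only [mem_gsedfOSet, h1, Nat.odd_iff]
    omega

lemma gsedf_count_PO (htodd : Odd t) (ht : 1 < t) (c : ZMod t) (hc : c ≠ 0) :
    extDiffCount ({0, 1} : Finset (ZMod t)) (gsedfOSet t) c = 1 := by
  rw [extDiffCount_eq_filter]
  have hkey := gsedf_key t htodd ht (-c) (neg_ne_zero.mpr hc)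
  have e0 : (0 : ZMod t) - c = -c := zero_sub c
  have e1 : (1 : ZMod t) - c = -c + 1 := sub_eq_neg_add 1 c
  by_cases hO : -c ∈ gsedfOSet t
  · have hO1 : -c + 1 ∉ gsedfOSet t := hkey.mp hO
    rw [show ({0, 1} : Finset (ZMod t)) = insert 0 {1} from rfl,
      filter_insert, if_pos (by rwa [e0]), filter_singleton, if_neg (by rwa [e1])]
    simp
  · have hO1 : -c + 1 ∈ gsedfOSet t := by
      by_contra hh; exact hO (hkey.mpr hh)
    rw [show ({0, 1} : Finset (ZMod t)) = insert 0 {1} from rfl,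
      filter_insert, if_neg (by rwa [e0]), filter_singleton, if_pos (by rwa [e1])]
    simp

lemma gsedf_card_filter (p : ℕ → Prop) [DecidablePred p] :
    (univ.filter (fun x : ZMod t => p x.val)).card = ((range t).filter p).card := by
  refine card_nbij' (fun x => x.val) (fun n => (n : ZMod t)) ?_ ?_ ?_ ?_
  · intro x hx
    simp only [Finset.mem_coe, mem_filter, mem_range] at hx ⊢
    exact ⟨ZMod.val_lt x, hx.2⟩
  · intro n hn
    simp only [Finset.mem_coe, mem_filter, mem_range] at hn ⊢
    rw [ZMod.val_cast_of_lt hn.1]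
    exact ⟨mem_univ _, hn.2⟩
  · intro x _; exact ZMod.natCast_zmod_val x
  · intro n hn
    exact ZMod.val_cast_of_lt (mem_range.mp (mem_filter.mp hn).1)

lemma gsedf_card_range_odd (n : ℕ) : ((range n).filter (fun k => Odd k)).card = n / 2 := by
  induction n with
  | zero => simp
  | succ n ih =>
    rw [range_add_one, filter_insert]
    by_cases hn : Odd n
    · rw [if_pos hn, card_insert_of_notMem (by simp)]
      rw [Nat.odd_iff] at hn
      omega
    · rw [if_neg hn, ih]
      rw [Nat.odd_iff] at hn
      omega

lemma gsedf_card_OSet (htodd : Odd t) : (gsedfOSet t).card = (t + 1) / 2 := by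
  have ht0 : 0 < t := Nat.pos_of_ne_zero (NeZero.ne t)
  have h0 : (gsedfOSet t).card = ((range t).filter (fun n => n = 0 ∨ Odd n)).card := by
    rw [gsedfOSet]
    convert gsedf_card_filter t (fun n => n = 0 ∨ Odd n) using 2
  have he : (range t).filter (fun n => n = 0 ∨ Odd n)
      = insert 0 ((range t).filter (fun n => Odd n)) := by
    ext n
    simp only [mem_filter, mem_range, mem_insert, Nat.odd_iff]
    omega
  rw [h0, he, card_insert_of_notMem (by simp [Nat.odd_iff]), gsedf_card_range_odd]
  obtain ⟨m, hm⟩ := htodd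
  omega

lemma gsedf_card_ESet (htodd : Odd t) : (gsedfESet t).card = (t - 1) / 2 := by
  have h1 : (gsedfOSet t).card + (gsedfESet t).card = t := by
    rw [← card_union_of_disjoint (gsedfOSet_disjoint t), gsedfOSet_union, card_univ, ZMod.card]
  have h2 := gsedf_card_OSet t htodd
  obtain ⟨m, hm⟩ := htodd
  omega

end ZModAux

/-- the recursive construction. From a
`(v, 2; 2λ, (v-1)/2; λ, λ)`-GSEDF in `G` (with `v, t > 1` odd) one obtains a
`(vt, 2; 4λ, (vt-1)/2; 2λ, 2λ)`-GSEDF in `G × ℤ_t`. -/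
theorem gsedf_recursive_construction {G : Type*} [AddCommGroup G] [Fintype G]
    (v t lam : ℕ) [NeZero t] (hv : 1 < v) (ht : 1 < t)
    (hvodd : Odd v) (htodd : Odd t) (hl : 0 < lam)
    (D : Fin 2 → Finset G)
    (h : IsGSEDF v 2 D ![2 * lam, (v - 1) / 2] ![lam, lam]) :
    ∃ D' : Fin 2 → Finset (G × ZMod t),
      IsGSEDF (v * t) 2 D' ![4 * lam, (v * t - 1) / 2] ![2 * lam, 2 * lam] := by
  classical
  obtain ⟨hcardG, hk, -, -, hdisj, hdelta⟩ := h
  have fin2 : ∀ i : Fin 2, i = 0 ∨ i = 1 := by decide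
  have hk0 : (D 0).card = 2 * lam := by simpa using hk 0
  have hk1 : (D 1).card = (v - 1) / 2 := by simpa using hk 1
  have hD01 : Disjoint (D 0) (D 1) := hdisj 0 1 (by decide)
  have hfil0 : (Finset.univ.filter (· ≠ (0 : Fin 2))) = {1} := by decide
  have hfil1 : (Finset.univ.filter (· ≠ (1 : Fin 2))) = {0} := by decide
  have hd01 : ∀ g : G, g ≠ 0 → extDiffCount (D 0) (D 1) g = lam := by
    intro g hg
    have h2 := hdelta 0 g hg
    rw [hfil0, Finset.sum_singleton] at h2
    simpa using h2
  have hd10 : ∀ g : G, g ≠ 0 → extDiffCount (D 1) (D 0) g = lam := by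
    intro g hg
    have h2 := hdelta 1 g hg
    rw [hfil1, Finset.sum_singleton] at h2
    simpa using h2
  have hval1 : (1 : ZMod t).val = 1 := by
    rw [ZMod.val_one_eq_one_mod]; exact Nat.mod_eq_of_lt ht
  have h01 : (0 : ZMod t) ≠ 1 := by
    intro hEq
    have h2 := congrArg ZMod.val hEq
    rw [ZMod.val_zero, hval1] at h2
    exact one_ne_zero h2.symm
  have hPcard : ({0, 1} : Finset (ZMod t)).card = 2 := by
    rw [card_insert_of_notMem (by simp [h01]), card_singleton]
  have hPsubO : ({0, 1} : Finset (ZMod t)) ⊆ gsedfOSet t := by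
    intro x hx
    rw [mem_gsedfOSet]
    rcases Finset.mem_insert.mp hx with rfl | hx1
    · left; exact ZMod.val_zero
    · right
      rw [Finset.mem_singleton.mp hx1, hval1]
      exact odd_one
  have hOE := gsedfOSet_disjoint t
  have hPE : Disjoint ({0, 1} : Finset (ZMod t)) (gsedfESet t) := hOE.mono_left hPsubO
  have hprodOE : Disjoint (D 1 ×ˢ gsedfOSet t) ((D 1)ᶜ ×ˢ gsedfESet t) := by
    rw [Finset.disjoint_left]
    rintro ⟨a, b⟩ h1 h2
    rw [Finset.mem_product] at h1 h2
    exact Finset.disjoint_left.mp hOE h1.2 h2.2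
  refine ⟨![D 0 ×ˢ ({0, 1} : Finset (ZMod t)),
      (D 1 ×ˢ gsedfOSet t) ∪ ((D 1)ᶜ ×ˢ gsedfESet t)], ?_, ?_, ?_, ?_, ?_, ?_⟩
  · rw [Fintype.card_prod, hcardG, ZMod.card]
  · intro i
    rcases fin2 i with rfl | rfl
    · simp only [Matrix.cons_val_zero]
      rw [Finset.card_product, hk0, hPcard]
      ring
    · simp only [Matrix.cons_val_one, Matrix.head_cons, Matrix.cons_val_zero]
      rw [Finset.card_union_of_disjoint hprodOE, Finset.card_product, Finset.card_product,
        hk1, Finset.card_compl, hcardG, hk1, gsedf_card_OSet t htodd, gsedf_card_ESet t htodd]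
      obtain ⟨a, ha⟩ := hvodd
      obtain ⟨b, hb⟩ := htodd
      subst ha hb
      have key : (2 * a + 1) * (2 * b + 1) = 4 * (a * b) + 2 * a + 2 * b + 1 := by ring
      rw [key]
      rw [show (2 * a + 1 - 1) / 2 = a from by omega,
        show (2 * b + 1 + 1) / 2 = b + 1 from by omega,
        show (2 * b + 1 - 1) / 2 = b from by omega,
        show 2 * a + 1 - a = a + 1 from by omega]
      have hdiv : (4 * (a * b) + 2 * a + 2 * b + 1 - 1) / 2 = 2 * (a * b) + a + b := by
        generalize a * b = cq
        omega
      rw [hdiv]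
      ring
  · intro i
    have h4 : 2 * 2 ≤ v * t := Nat.mul_le_mul hv ht
    rcases fin2 i with rfl | rfl
    · simp only [Matrix.cons_val_zero]; omega
    · simp only [Matrix.cons_val_one, Matrix.head_cons, Matrix.cons_val_zero]; omega
  · intro i
    rcases fin2 i with rfl | rfl
    · simp only [Matrix.cons_val_zero]; omega
    · simp only [Matrix.cons_val_one, Matrix.head_cons, Matrix.cons_val_zero]; omega
  · have hmain : Disjoint (D 0 ×ˢ ({0, 1} : Finset (ZMod t)))
        ((D 1 ×ˢ gsedfOSet t) ∪ ((D 1)ᶜ ×ˢ gsedfESet t)) := by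
      rw [Finset.disjoint_union_right]
      constructor
      · rw [Finset.disjoint_left]
        rintro ⟨a, b⟩ h1 h2
        rw [Finset.mem_product] at h1 h2
        exact Finset.disjoint_left.mp hD01 h1.1 h2.1
      · rw [Finset.disjoint_left]
        rintro ⟨a, b⟩ h1 h2
        rw [Finset.mem_product] at h1 h2
        exact Finset.disjoint_left.mp hPE h1.2 h2.2
    intro i j hij
    rcases fin2 i with rfl | rfl <;> rcases fin2 j with rfl | rfl
    · exact absurd rfl hij
    · simp only [Matrix.cons_val_zero, Matrix.cons_val_one, Matrix.head_cons]
      exact hmain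
    · simp only [Matrix.cons_val_zero, Matrix.cons_val_one, Matrix.head_cons]
      exact hmain.symm
    · exact absurd rfl hij
  · rintro i ⟨g, c⟩ hg'
    have hsum : extDiffCount (D 0) (D 1) g + extDiffCount (D 0) ((D 1)ᶜ) g = 2 * lam := by
      rw [← extDiffCount_union_right _ _ _ _ disjoint_compl_right, Finset.union_compl,
        extDiffCount_univ, hk0]
    have hFsum : extDiffCount ({0, 1} : Finset (ZMod t)) (gsedfOSet t) c
        + extDiffCount ({0, 1} : Finset (ZMod t)) (gsedfESet t) c = 2 := by
      rw [← extDiffCount_union_right _ _ _ _ hOE, gsedfOSet_union, extDiffCount_univ, hPcard]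
    rcases fin2 i with rfl | rfl
    · rw [hfil0, Finset.sum_singleton]
      simp only [Matrix.cons_val_zero, Matrix.cons_val_one, Matrix.head_cons]
      rw [extDiffCount_union_right _ _ _ _ hprodOE, extDiffCount_prod, extDiffCount_prod]
      by_cases hc : c = 0
      · subst hc
        have hgne : g ≠ 0 := fun hh => hg' (by simp [hh, Prod.ext_iff])
        have h2 : extDiffCount (D 0) ((D 1)ᶜ) g = lam := by
          rw [hd01 g hgne] at hsum; omega
        rw [hd01 g hgne, h2, ← Nat.mul_add, hFsum]
        ring
      · have hF : extDiffCount ({0, 1} : Finset (ZMod t)) (gsedfOSet t) c = 1 :=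
          gsedf_count_PO t htodd ht c hc
        have hF' : extDiffCount ({0, 1} : Finset (ZMod t)) (gsedfESet t) c = 1 := by omega
        rw [hF, hF', mul_one, mul_one, hsum]
    · rw [hfil1, Finset.sum_singleton]
      simp only [Matrix.cons_val_zero, Matrix.cons_val_one, Matrix.head_cons]
      rw [extDiffCount_union_left _ _ _ _ hprodOE, extDiffCount_prod, extDiffCount_prod]
      have hMsum : extDiffCount (D 1) (D 0) g + extDiffCount ((D 1)ᶜ) (D 0) g = 2 * lam := by
        rw [← extDiffCount_union_left _ _ _ _ disjoint_compl_right, Finset.union_compl,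
          extDiffCount_univ_left, hk0]
      have hKsum : extDiffCount (gsedfOSet t) ({0, 1} : Finset (ZMod t)) c
          + extDiffCount (gsedfESet t) ({0, 1} : Finset (ZMod t)) c = 2 := by
        rw [← extDiffCount_union_left _ _ _ _ hOE, gsedfOSet_union, extDiffCount_univ_left, hPcard]
      by_cases hc : c = 0
      · subst hc
        have hgne : g ≠ 0 := fun hh => hg' (by simp [hh, Prod.ext_iff])
        have h2 : extDiffCount ((D 1)ᶜ) (D 0) g = lam := by
          rw [hd10 g hgne] at hMsum; omega
        rw [hd10 g hgne, h2, ← Nat.mul_add, hKsum]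
        ring
      · have hK : extDiffCount (gsedfOSet t) ({0, 1} : Finset (ZMod t)) c = 1 := by
          rw [extDiffCount_swap]
          exact gsedf_count_PO t htodd ht (-c) (neg_ne_zero.mpr hc)
        have hK' : extDiffCount (gsedfESet t) ({0, 1} : Finset (ZMod t)) c = 1 := by omega
        rw [hK, hK', mul_one, mul_one, hMsum]
end
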